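/- The double integral ∫₀¹∫₀¹ 3(1-a)³/(3-(1-a)(2-b)) db da equals (189/8)·ln 3 − 26·ln 2 − 15/2. -/

import Mathlib

lemma stit_inner_eq (a : ℝ) (ha : a ∈ Set.uIcc (0:ℝ) 1) :
    (∫ b in (0:ℝ)..1, 3 * (1 - a)^3 / (3 - (1 - a) * (2 - b)))
      = 3*(1-a)^2 * (Real.log (2+a) - Real.log (1+2*a)) := by
  rw [Set.uIcc_of_le (by norm_num)] at ha
  obtain ⟨ha0, ha1⟩ := ha
  rcases eq_or_lt_of_le ha1 with h1 | h1
  · rw [← h1]; norm_num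
  · have hc : 0 < 1 - a := by linarith
    have key : ∀ b ∈ Set.uIcc (0:ℝ) 1, 0 < 3 - (1-a)*(2-b) := by
      intro b hb
      rw [Set.uIcc_of_le (by norm_num)] at hb
      obtain ⟨hb0, hb1⟩ := hb
      nlinarith
    have hder : ∀ b ∈ Set.uIcc (0:ℝ) 1,
        HasDerivAt (fun b => 3*(1-a)^2 * Real.log (3 - (1-a)*(2-b)))
          (3 * (1 - a)^3 / (3 - (1 - a) * (2 - b))) b := by
      intro b hb
      have hD : 0 < 3 - (1-a)*(2-b) := key b hb
      have hlin : HasDerivAt (fun b : ℝ => 3 - (1-a)*(2-b)) (1-a) b := by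
        have h : (fun b : ℝ => 3 - (1-a)*(2-b)) = fun b => (1-a)*b + (3-2*(1-a)) := by
          funext x; ring
        rw [h]
        simpa using ((hasDerivAt_id b).const_mul (1-a)).add_const (3-2*(1-a))
      have h2 := (hlin.log (ne_of_gt hD)).const_mul (3*(1-a)^2)
      refine h2.congr_deriv ?_
      field_simp
    have hint : IntervalIntegrable
        (fun b => 3 * (1 - a)^3 / (3 - (1 - a) * (2 - b)))
        MeasureTheory.volume 0 1 := by
      apply ContinuousOn.intervalIntegrable
      apply ContinuousOn.div (by fun_prop) (by fun_prop)
      intro b hb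
      exact ne_of_gt (key b hb)
    rw [intervalIntegral.integral_eq_sub_of_hasDerivAt hder hint]
    have h2 : (3:ℝ) - (1-a)*(2-1) = 2+a := by ring
    have h3 : (3:ℝ) - (1-a)*(2-0) = 1+2*a := by ring
    rw [h2, h3]; ring

noncomputable def stitGfun (a : ℝ) : ℝ :=
  (27 - (1-a)^3) * Real.log (2+a) - 27*a + 9/2*(2+a)^2 - (2+a)^3/3
    - ((27/8 - (1-a)^3) * Real.log (1+2*a) - 27/8*(1+2*a) + 9/16*(1+2*a)^2 - (1+2*a)^3/24)

lemma stitG_deriv (a : ℝ) (ha : a ∈ Set.uIcc (0:ℝ) 1) :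
    HasDerivAt stitGfun (3*(1-a)^2 * (Real.log (2+a) - Real.log (1+2*a))) a := by
  rw [Set.uIcc_of_le (by norm_num)] at ha
  obtain ⟨ha0, ha1⟩ := ha
  have h2a : (0:ℝ) < 2 + a := by linarith
  have h12a : (0:ℝ) < 1 + 2*a := by linarith
  have hp : HasDerivAt (fun a : ℝ => 2 + a) 1 a := by
    simpa using (hasDerivAt_id a).const_add 2
  have hs : HasDerivAt (fun a : ℝ => 1 + 2*a) 2 a := by
    simpa using ((hasDerivAt_id a).const_mul 2).const_add 1
  have h1 : HasDerivAt (fun a : ℝ => 1 - a) (-1) a := by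
    simpa using (hasDerivAt_id a).const_sub 1
  have hcube := h1.pow 3
  have l1 := hp.log (ne_of_gt h2a)
  have l2 := hs.log (ne_of_gt h12a)
  have t1 := ((hasDerivAt_const a (27:ℝ)).sub hcube).mul l1
  have t2 := (hasDerivAt_id a).const_mul (27:ℝ)
  have t3 := (hp.pow 2).const_mul (9/2 : ℝ)
  have t4 := (hp.pow 3).div_const (3:ℝ)
  have t5 := ((hasDerivAt_const a (27/8:ℝ)).sub hcube).mul l2
  have t6 := hs.const_mul (27/8 : ℝ)
  have t7 := (hs.pow 2).const_mul (9/16 : ℝ)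
  have t8 := (hs.pow 3).div_const (24:ℝ)
  have hG := (((t1.sub t2).add t3).sub t4).sub (((t5.sub t6).add t7).sub t8)
  refine hG.congr_deriv ?_
  simp only [Pi.sub_apply, Pi.pow_apply]
  field_simp
  ring

theorem stit_p0 :
    (∫ a in (0:ℝ)..1, ∫ b in (0:ℝ)..1,
        3 * (1 - a)^3 / (3 - (1 - a) * (2 - b)))
      = 189/8 * Real.log 3 - 26 * Real.log 2 - 15/2 := by
  rw [intervalIntegral.integral_congr
    (g := fun a => 3*(1-a)^2 * (Real.log (2+a) - Real.log (1+2*a)))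
    (fun a ha => stit_inner_eq a ha)]
  have hint : IntervalIntegrable
      (fun a => 3*(1-a)^2 * (Real.log (2+a) - Real.log (1+2*a)))
      MeasureTheory.volume 0 1 := by
    apply ContinuousOn.intervalIntegrable
    apply ContinuousOn.mul (by fun_prop)
    apply ContinuousOn.sub
    · apply ContinuousOn.log (by fun_prop)
      intro x hx
      rw [Set.uIcc_of_le (by norm_num)] at hx
      nlinarith [hx.1]
    · apply ContinuousOn.log (by fun_prop)
      intro x hx
      rw [Set.uIcc_of_le (by norm_num)] at hx
      nlinarith [hx.1]
  rw [intervalIntegral.integral_eq_sub_of_hasDerivAt (fun a ha => stitG_deriv a ha) hint]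
  unfold stitGfun
  norm_num [Real.log_one]
  ring
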